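/- Let A ∈ ℝ^{n×n}, B ∈ ℝ^{n×1} with (A,B) controllable, L_g ∈ ℝ^{1×N_g}, S_g ∈ ℝ^{N_g×N_g} with (L_g,S_g) observable and σ(A)∩σ(S_g)=∅. Then the unique solution Π of AΠ + B L_g = Π S_g satisfies rank(Π) = min{n, N_g}. -/

import Mathlib

open Matrix Polynomial

section Helpers

lemma eval_charpoly' {m : Type*} [Fintype m] [DecidableEq m] {K : Type*} [CommRing K]
    (M : Matrix m m K) (r : K) : M.charpoly.eval r = (r • (1 : Matrix m m K) - M).det := by
  rw [Matrix.charpoly, ← Polynomial.coe_evalRingHom, RingHom.map_det]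
  congr 1
  ext i j
  by_cases h : i = j <;>
    simp [Matrix.charmatrix_apply, Matrix.diagonal, h, Matrix.sub_apply, Matrix.one_apply]

lemma root_mem_spectrum {m : Type*} [Fintype m] [DecidableEq m]
    (M : Matrix m m ℂ) {μ : ℂ} (h : M.charpoly.IsRoot μ) : μ ∈ spectrum ℂ M := by
  rw [spectrum.mem_iff]
  rw [Polynomial.IsRoot, eval_charpoly'] at h
  rw [Algebra.algebraMap_eq_smul_one]
  intro hu
  have := hu.map (Matrix.detMonoidHom)
  simp only [Matrix.coe_detMonoidHom, h] at this
  exact this.ne_zero rfl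

lemma isUnit_aeval_complex {n Ng : ℕ} (A' : Matrix (Fin n) (Fin n) ℂ)
    (S' : Matrix (Fin Ng) (Fin Ng) ℂ)
    (h : Disjoint (spectrum ℂ A') (spectrum ℂ S')) :
    IsUnit (aeval S' A'.charpoly) := by
  set p := A'.charpoly with hp
  have hmon : p.Monic := A'.charpoly_monic
  have hsplit : p.Splits := IsAlgClosed.splits p
  have hprod := hsplit.eq_prod_roots_of_monic hmon
  set l := p.roots.toList with hl
  have hl2 : (l : Multiset ℂ) = p.roots := Multiset.coe_toList _
  have hprod' : p = (l.map (fun a => X - C a)).prod := by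
    rw [hprod, ← hl2, Multiset.map_coe, Multiset.prod_coe]
  have : aeval S' p = (l.map (fun a => aeval S' (X - C a))).prod := by
    rw [hprod', map_list_prod (aeval S'), List.map_map]
    rfl
  rw [this]
  apply List.prod_isUnit
  intro x hx
  simp only [List.mem_map] at hx
  obtain ⟨a, ha, rfl⟩ := hx
  have hroot : p.IsRoot a := by
    have : a ∈ p.roots := by rw [← hl2]; exact_mod_cast ha
    exact (Polynomial.mem_roots hmon.ne_zero).1 this
  have haspec : a ∈ spectrum ℂ A' := root_mem_spectrum A' hroot
  have hnotS : a ∉ spectrum ℂ S' := fun hc => (h.le_bot ⟨haspec, hc⟩ : (a : ℂ) ∈ (⊥ : Set ℂ)).elim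
  rw [spectrum.notMem_iff] at hnotS
  have : aeval S' (X - C a) = -(algebraMap ℂ _ a - S') := by
    simp [map_sub, aeval_X, aeval_C, neg_sub]
  rw [this]
  exact hnotS.neg

lemma isUnit_aeval_real {n Ng : ℕ} (A : Matrix (Fin n) (Fin n) ℝ)
    (Sg : Matrix (Fin Ng) (Fin Ng) ℝ)
    (hspec : Disjoint (spectrum ℂ (A.map (fun a => (a : ℂ))))
      (spectrum ℂ (Sg.map (fun a => (a : ℂ))))) :
    IsUnit (aeval Sg A.charpoly) := by
  have key := isUnit_aeval_complex _ _ hspec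
  have hmap : (A.map (fun a => (a : ℂ))).charpoly = A.charpoly.map (algebraMap ℝ ℂ) := by
    rw [← Matrix.charpoly_map]; rfl
  rw [hmap, aeval_map_algebraMap] at key
  have hcomm : (AlgHom.mapMatrix (Algebra.ofId ℝ ℂ)) (aeval Sg A.charpoly)
      = aeval (Sg.map (fun a => (a : ℂ))) A.charpoly := by
    rw [← Polynomial.aeval_algHom_apply]
    rfl
  rw [← hcomm] at key
  rw [Matrix.isUnit_iff_isUnit_det] at key ⊢
  rw [isUnit_iff_ne_zero] at key ⊢
  intro h0
  apply key
  rw [← (Algebra.ofId ℝ ℂ).map_det, h0, map_zero]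

lemma tri_sum {M : Type*} [AddCommMonoid M] (n : ℕ) (g : ℕ → ℕ → M)
    (hg : ∀ j i, n < j + i + 1 → g j i = 0) :
    ∑ k ∈ Finset.range (n+1), ∑ i ∈ Finset.range k, g (k-1-i) i
      = ∑ j ∈ Finset.range n, ∑ i ∈ Finset.range n, g j i := by
  have hshrink : ∀ j ∈ Finset.range n, ∑ i ∈ Finset.range n, g j i
      = ∑ i ∈ Finset.range (n - j), g j i := by
    intro j hj
    refine (Finset.sum_subset (Finset.range_subset_range.2 (by omega)) ?_).symm
    intro i hi hni
    simp only [Finset.mem_range] at hi hni hj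
    exact hg j i (by omega)
  rw [Finset.sum_congr rfl hshrink, Finset.sum_sigma', Finset.sum_sigma']
  refine Finset.sum_nbij' (fun x => ⟨x.1 - 1 - x.2, x.2⟩) (fun x => ⟨x.1 + x.2 + 1, x.2⟩)
    ?_ ?_ ?_ ?_ ?_ <;>
    rintro ⟨a, b⟩ h <;>
    simp only [Finset.mem_sigma, Finset.mem_range] at h ⊢
  · omega
  · omega
  · first
    | (simp only [Sigma.mk.inj_iff, heq_eq_eq, and_true]; omega)
    | (congr 1; omega)
  · first
    | (simp only [Sigma.mk.inj_iff, heq_eq_eq, and_true]; omega)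
    | (congr 1; omega)

lemma sylv_pow {n Ng : ℕ} (A : Matrix (Fin n) (Fin n) ℝ) (BL : Matrix (Fin n) (Fin Ng) ℝ)
    (Sg : Matrix (Fin Ng) (Fin Ng) ℝ) (P : Matrix (Fin n) (Fin Ng) ℝ)
    (hP : A * P + BL = P * Sg) (k : ℕ) :
    P * Sg ^ k = A ^ k * P + ∑ i ∈ Finset.range k, A ^ (k - 1 - i) * BL * Sg ^ i := by
  induction k with
  | zero => simp
  | succ k ih =>
    rw [pow_succ, ← Matrix.mul_assoc, ih, Matrix.add_mul, Matrix.mul_assoc, ← hP,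
      Finset.sum_range_succ' (fun i => A ^ (k + 1 - 1 - i) * BL * Sg ^ i)]
    rw [Matrix.mul_add, ← Matrix.mul_assoc, ← pow_succ]
    have h1 : ∀ i ∈ Finset.range k,
        A ^ (k - 1 - i) * BL * Sg ^ i * Sg = A ^ (k + 1 - 1 - (i+1)) * BL * Sg ^ (i+1) := by
      intro i hi
      have he : k + 1 - 1 - (i+1) = k - 1 - i := by omega
      rw [he, Matrix.mul_assoc, ← pow_succ]
    rw [Matrix.sum_mul, Finset.sum_congr rfl h1]
    simp only [Nat.add_sub_cancel, Nat.sub_zero, pow_zero, add_assoc, Matrix.mul_one]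
    congr 1
    rw [add_comm]

lemma key_factor {n Ng : ℕ} (A : Matrix (Fin n) (Fin n) ℝ) (B : Matrix (Fin n) (Fin 1) ℝ)
    (Lg : Matrix (Fin 1) (Fin Ng) ℝ) (Sg : Matrix (Fin Ng) (Fin Ng) ℝ)
    (P : Matrix (Fin n) (Fin Ng) ℝ) (hP : A * P + B * Lg = P * Sg) :
    P * aeval Sg A.charpoly =
      (Matrix.of fun (i : Fin n) (j : Fin n) => ((A ^ (j : ℕ)) * B) i 0) *
      ((Matrix.of fun (j : Fin n) (l : Fin n) => A.charpoly.coeff ((j : ℕ) + (l : ℕ) + 1)) *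
       (Matrix.of fun (l : Fin n) (k : Fin Ng) => (Lg * Sg ^ (l : ℕ)) 0 k)) := by
  set χ := A.charpoly with hχ
  have hdeg : χ.natDegree = n := by
    rw [hχ, A.charpoly_natDegree_eq_dim, Fintype.card_fin]
  set BL := B * Lg with hBL
  have h1 : P * aeval Sg χ = ∑ k ∈ Finset.range (n+1), χ.coeff k • (P * Sg ^ k) := by
    rw [Polynomial.aeval_eq_sum_range, hdeg, Matrix.mul_sum]
    exact Finset.sum_congr rfl fun k _ => Matrix.mul_smul _ _ _
  have h0 : ∑ k ∈ Finset.range (n+1), χ.coeff k • (A ^ k * P) = 0 := by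
    have hch : aeval A χ = 0 := A.aeval_self_charpoly
    have hsum : aeval A χ = ∑ k ∈ Finset.range (χ.natDegree + 1), χ.coeff k • A ^ k :=
      Polynomial.aeval_eq_sum_range _
    rw [hdeg] at hsum
    have : (∑ k ∈ Finset.range (n+1), χ.coeff k • A ^ k) * P = 0 := by
      rw [← hsum, hch, Matrix.zero_mul]
    rw [← this, Matrix.sum_mul]
    exact Finset.sum_congr rfl fun k _ => (Matrix.smul_mul _ _ _).symm
  have h2 : P * aeval Sg χ
      = ∑ k ∈ Finset.range (n+1), ∑ i ∈ Finset.range k,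
          χ.coeff ((k-1-i) + i + 1) • (A ^ (k-1-i) * BL * Sg ^ i) := by
    calc P * aeval Sg χ
        = ∑ k ∈ Finset.range (n+1), χ.coeff k • (P * Sg ^ k)
          - ∑ k ∈ Finset.range (n+1), χ.coeff k • (A ^ k * P) := by rw [h0, sub_zero, h1]
      _ = ∑ k ∈ Finset.range (n+1), χ.coeff k • (P * Sg ^ k - A ^ k * P) := by
          rw [← Finset.sum_sub_distrib]
          exact Finset.sum_congr rfl fun k _ => (smul_sub _ _ _).symm
      _ = ∑ k ∈ Finset.range (n+1), χ.coeff k •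
            ∑ i ∈ Finset.range k, A ^ (k-1-i) * BL * Sg ^ i := by
          refine Finset.sum_congr rfl fun k _ => ?_
          rw [sylv_pow A BL Sg P (by rw [hBL]; exact hP) k, add_sub_cancel_left]
      _ = ∑ k ∈ Finset.range (n+1), ∑ i ∈ Finset.range k,
            χ.coeff ((k-1-i) + i + 1) • (A ^ (k-1-i) * BL * Sg ^ i) := by
          refine Finset.sum_congr rfl fun k _ => ?_
          rw [Finset.smul_sum]
          refine Finset.sum_congr rfl fun i hi => ?_
          congr 2
          simp only [Finset.mem_range] at hi
          omega
  have hg : ∀ j i, n < j + i + 1 → χ.coeff (j + i + 1) • (A ^ j * BL * Sg ^ i) = 0 := by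
    intro j i hji
    rw [Polynomial.coeff_eq_zero_of_natDegree_lt (by omega : χ.natDegree < j + i + 1), zero_smul]
  rw [h2, tri_sum n (fun j i => χ.coeff (j + i + 1) • (A ^ j * BL * Sg ^ i)) hg]
  ext i k
  have hentry : ∀ (j l : Fin n),
      (χ.coeff ((j:ℕ) + (l:ℕ) + 1) • (A ^ (j:ℕ) * BL * Sg ^ (l:ℕ))) i k
        = ((A ^ (j:ℕ)) * B) i 0 * (χ.coeff ((j:ℕ) + (l:ℕ) + 1) * (Lg * Sg ^ (l:ℕ)) 0 k) := by
    intro j l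
    have hassoc : A ^ (j:ℕ) * BL * Sg ^ (l:ℕ) = (A ^ (j:ℕ) * B) * (Lg * Sg ^ (l:ℕ)) := by
      rw [hBL, Matrix.mul_assoc, Matrix.mul_assoc]
      exact (Matrix.mul_assoc _ _ _).symm
    rw [Matrix.smul_apply, hassoc, Matrix.mul_apply, Fin.sum_univ_one]
    rw [smul_eq_mul]
    ring
  calc (∑ j ∈ Finset.range n, ∑ l ∈ Finset.range n,
          χ.coeff (j + l + 1) • (A ^ j * BL * Sg ^ l)) i k
      = ∑ j ∈ Finset.range n, ∑ l ∈ Finset.range n,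
          (χ.coeff (j + l + 1) • (A ^ j * BL * Sg ^ l)) i k := by
        simp [Matrix.sum_apply]
    _ = ∑ j : Fin n, ∑ l : Fin n,
          (χ.coeff ((j:ℕ) + (l:ℕ) + 1) • (A ^ (j:ℕ) * BL * Sg ^ (l:ℕ))) i k := by
        rw [← Fin.sum_univ_eq_sum_range
          (fun j => ∑ l ∈ Finset.range n, (χ.coeff (j + l + 1) • (A ^ j * BL * Sg ^ l)) i k) n]
        exact Finset.sum_congr rfl fun j _ => (Fin.sum_univ_eq_sum_range _ _).symm
    _ = ∑ j : Fin n, ∑ l : Fin n,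
          ((A ^ (j:ℕ)) * B) i 0 * (χ.coeff ((j:ℕ) + (l:ℕ) + 1) * (Lg * Sg ^ (l:ℕ)) 0 k) := by
        exact Finset.sum_congr rfl fun j _ => Finset.sum_congr rfl fun l _ => hentry j l
    _ = ((Matrix.of fun (i : Fin n) (j : Fin n) => ((A ^ (j : ℕ)) * B) i 0) *
      ((Matrix.of fun (j : Fin n) (l : Fin n) => χ.coeff ((j : ℕ) + (l : ℕ) + 1)) *
       (Matrix.of fun (l : Fin n) (k : Fin Ng) => (Lg * Sg ^ (l : ℕ)) 0 k))) i k := by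
        conv_rhs => rw [Matrix.mul_apply]
        refine Finset.sum_congr rfl fun j _ => ?_
        conv_rhs => rw [Matrix.mul_apply, Finset.mul_sum]
        rfl

lemma hankel_isUnit {n : ℕ} (A : Matrix (Fin n) (Fin n) ℝ) :
    IsUnit (Matrix.of fun (j : Fin n) (l : Fin n) => A.charpoly.coeff ((j : ℕ) + (l : ℕ) + 1)) := by
  set χ := A.charpoly with hχ
  have hdeg : χ.natDegree = n := by
    rw [hχ, A.charpoly_natDegree_eq_dim, Fintype.card_fin]
  set H := Matrix.of fun (j : Fin n) (l : Fin n) => χ.coeff ((j : ℕ) + (l : ℕ) + 1) with hH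
  set H' := H.submatrix id ⇑(Fin.revPerm : Equiv.Perm (Fin n)) with hH'
  have htri : H'.BlockTriangular id := by
    intro i j hij
    simp only [id_eq] at hij
    have hij' : (j : ℕ) < (i : ℕ) := hij
    have hi := i.isLt
    have hj := j.isLt
    have hrev : ((Fin.revPerm j : Fin n) : ℕ) = n - (j + 1) := Fin.val_rev j
    simp only [hH', Matrix.submatrix_apply, id_eq, hH, Matrix.of_apply]
    exact Polynomial.coeff_eq_zero_of_natDegree_lt (by rw [hdeg]; omega)
  have hdet' : H'.det = 1 := by
    rw [Matrix.det_of_upperTriangular htri]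
    refine Finset.prod_eq_one fun i _ => ?_
    have hi := i.isLt
    have hrev : ((Fin.revPerm i : Fin n) : ℕ) = n - (i + 1) := Fin.val_rev i
    simp only [hH', Matrix.submatrix_apply, id_eq, hH, Matrix.of_apply]
    have hn : (i : ℕ) + ((Fin.revPerm i : Fin n) : ℕ) + 1 = n := by omega
    rw [hn, ← hdeg]
    exact A.charpoly_monic.coeff_natDegree
  have hperm : H'.det = (Equiv.Perm.sign (Fin.revPerm : Equiv.Perm (Fin n)) : ℝ) * H.det := by
    rw [hH']
    exact Matrix.det_permute' _ _
  rw [Matrix.isUnit_iff_isUnit_det, isUnit_iff_ne_zero]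
  intro h0
  rw [hperm, h0, mul_zero] at hdet'
  exact one_ne_zero hdet'.symm

end Helpers

/-- with (A,B) controllable, (L_g,S_g) observable and disjoint spectra,
the solution of the Sylvester equation AΠ + BL_g = ΠS_g has rank min{n,N_g}. -/
theorem stmt_8 (n Ng : ℕ) (A : Matrix (Fin n) (Fin n) ℝ) (B : Matrix (Fin n) (Fin 1) ℝ)
    (Lg : Matrix (Fin 1) (Fin Ng) ℝ) (Sg : Matrix (Fin Ng) (Fin Ng) ℝ)
    (hctrb : (Matrix.of fun (i : Fin n) (j : Fin n) => ((A ^ (j : ℕ)) * B) i 0).rank = n)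
    (hobs : IsUnit (Matrix.of fun (i : Fin Ng) (j : Fin Ng) => (Lg * Sg ^ (i : ℕ)) 0 j))
    (hspec : Disjoint (spectrum ℂ (A.map (fun a => (a : ℂ))))
      (spectrum ℂ (Sg.map (fun a => (a : ℂ)))))
    (P : Matrix (Fin n) (Fin Ng) ℝ) (hP : A * P + B * Lg = P * Sg) :
    P.rank = min n Ng := by
  classical
  set Cmat := (Matrix.of fun (i : Fin n) (j : Fin n) => ((A ^ (j : ℕ)) * B) i 0) with hCm
  set Hmat := (Matrix.of fun (j : Fin n) (l : Fin n) =>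
    A.charpoly.coeff ((j : ℕ) + (l : ℕ) + 1)) with hHm
  set Omat := (Matrix.of fun (l : Fin n) (k : Fin Ng) => (Lg * Sg ^ (l : ℕ)) 0 k) with hOm
  set F := (Matrix.of fun (i : Fin Ng) (j : Fin Ng) => (Lg * Sg ^ (i : ℕ)) 0 j) with hF
  have hkey : P * aeval Sg A.charpoly = Cmat * (Hmat * Omat) := key_factor A B Lg Sg P hP
  -- C is invertible
  have hCli : LinearIndependent ℝ (fun i => Cmat i) := by
    rw [linearIndependent_iff_card_eq_finrank_span]
    rw [Fintype.card_fin]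
    have := Cmat.rank_eq_finrank_span_row
    rw [hctrb] at this
    exact this
  have hCunit : IsUnit Cmat := Matrix.linearIndependent_rows_iff_isUnit.mp hCli
  have hHunit : IsUnit Hmat := hankel_isUnit A
  have hXunit : IsUnit (aeval Sg A.charpoly) := isUnit_aeval_real A Sg hspec
  -- rank P = rank Omat
  have hrank : P.rank = Omat.rank := by
    calc P.rank = (P * aeval Sg A.charpoly).rank :=
          (Matrix.rank_mul_eq_left_of_isUnit_det _ P
            ((Matrix.isUnit_iff_isUnit_det _).mp hXunit)).symm
      _ = (Cmat * (Hmat * Omat)).rank := by rw [hkey]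
      _ = (Hmat * Omat).rank :=
          Matrix.rank_mul_eq_right_of_isUnit_det Cmat _ ((Matrix.isUnit_iff_isUnit_det _).mp hCunit)
      _ = Omat.rank :=
          Matrix.rank_mul_eq_right_of_isUnit_det Hmat _ ((Matrix.isUnit_iff_isUnit_det _).mp hHunit)
  rw [hrank]
  rcases le_or_gt n Ng with h | h
  · -- n ≤ Ng : rows of Omat are a subfamily of the independent rows of F
    have hFli : LinearIndependent ℝ (fun i => F i) :=
      Matrix.linearIndependent_rows_iff_isUnit.mpr hobs
    have hOli : LinearIndependent ℝ (fun i : Fin n => Omat i) := by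
      have heq : (fun i : Fin n => Omat i) = (fun i : Fin n => F (Fin.castLE h i)) := by
        funext i
        ext k
        simp only [hOm, hF, Matrix.of_apply]
        congr 1
      rw [heq]
      exact hFli.comp (Fin.castLE h) (Fin.castLE_injective h)
    rw [hOli.rank_matrix, Fintype.card_fin, min_eq_left h]
  · -- Ng < n : F is obtained from Omat by selecting rows
    have hle : Ng ≤ n := h.le
    set E := (Matrix.of fun (i : Fin Ng) (j : Fin n) =>
      if Fin.castLE hle i = j then (1 : ℝ) else 0) with hE
    have hEO : E * Omat = F := by
      ext i k
      rw [Matrix.mul_apply]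
      rw [Finset.sum_eq_single (Fin.castLE hle i)]
      · show (if Fin.castLE hle i = Fin.castLE hle i then (1:ℝ) else 0)
            * Omat (Fin.castLE hle i) k = F i k
        rw [if_pos rfl, one_mul]
        rfl
      · intro b _ hb
        simp only [hE, Matrix.of_apply, if_neg (Ne.symm hb), zero_mul]
      · intro hni
        exact (hni (Finset.mem_univ _)).elim
    have hFrank : F.rank = Ng := by
      rw [Matrix.rank_of_isUnit F hobs, Fintype.card_fin]
    have h1 : Ng ≤ Omat.rank := by
      have hm : (E * Omat).rank ≤ Omat.rank := Matrix.rank_mul_le_right E Omat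
      rwa [hEO, hFrank] at hm
    have h2 : Omat.rank ≤ Ng := by
      have := Omat.rank_le_card_width
      rwa [Fintype.card_fin] at this
    rw [min_eq_right hle]
    omega
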